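/- The maximal number of nearest-neighbour bonds among subsets of $\mathbb{Z}^2$ with exactly $\ell^2$ elements ($\ell \ge 1$) equals $2\ell^2 - 2\ell$, and it is attained by the $\ell \times \ell$ square. -/

import Mathlib

/-- Nearest-neighbour adjacency in `ℤ²`. -/
def Adj (x y : ℤ × ℤ) : Prop := |x.1 - y.1| + |x.2 - y.2| = 1

instance (x y : ℤ × ℤ) : Decidable (Adj x y) := by unfold Adj; infer_instance

/-- Number of nearest-neighbour bonds (unordered adjacent pairs) of a finite
subset of `ℤ²`. -/
def bonds (C : Finset (ℤ × ℤ)) : ℕ :=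
  ((C ×ˢ C).filter (fun p => Adj p.1 p.2)).card / 2

lemma adj_iff (x y : ℤ × ℤ) : Adj x y ↔
    y = x + (1,0) ∨ y = x + (-1,0) ∨ y = x + (0,1) ∨ y = x + (0,-1) := by
  obtain ⟨a,b⟩ := x; obtain ⟨c,d⟩ := y
  simp only [Adj, Prod.mk_add_mk, Prod.mk.injEq]
  rw [Int.abs_eq_natAbs, Int.abs_eq_natAbs]
  omega

open Finset in
lemma card_dir (C : Finset (ℤ × ℤ)) (e : ℤ × ℤ) :
    ((C ×ˢ C).filter (fun p => p.2 = p.1 + e)).card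
      = (C.filter (fun x => x + e ∈ C)).card := by
  rw [← Finset.card_image_of_injective (C.filter (fun x => x + e ∈ C))
    (f := fun x => (x, x + e)) (fun a b h => by simpa using (Prod.ext_iff.1 h).1)]
  congr 1
  ext ⟨p, q⟩
  simp only [Finset.mem_filter, Finset.mem_product, Finset.mem_image, Prod.mk.injEq]
  constructor
  · rintro ⟨⟨hp, hq⟩, rfl⟩; exact ⟨p, ⟨hp, hq⟩, rfl, rfl⟩
  · rintro ⟨x, ⟨hx, hxe⟩, rfl, rfl⟩; exact ⟨⟨hx, hxe⟩, rfl⟩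

lemma card_neg (C : Finset (ℤ × ℤ)) (e : ℤ × ℤ) :
    (C.filter (fun x => x + (-e) ∈ C)).card = (C.filter (fun x => x + e ∈ C)).card := by
  rw [← Finset.card_image_of_injective (C.filter (fun x => x + (-e) ∈ C))
    (f := fun x => x + (-e)) (add_left_injective _)]
  congr 1
  ext y
  simp only [Finset.mem_image, Finset.mem_filter]
  constructor
  · rintro ⟨x, ⟨hx, hxe⟩, rfl⟩; exact ⟨hxe, by simpa using hx⟩
  · rintro ⟨hy, hye⟩; exact ⟨y + e, ⟨hye, by simpa using hy⟩, by simp⟩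

def HB (C : Finset (ℤ × ℤ)) : ℕ := (C.filter (fun x => x + (1,0) ∈ C)).card
def VB (C : Finset (ℤ × ℤ)) : ℕ := (C.filter (fun x => x + (0,1) ∈ C)).card

lemma disj_dir (C : Finset (ℤ × ℤ)) {e e' : ℤ × ℤ} (h : e ≠ e') :
    Disjoint ((C ×ˢ C).filter (fun p => p.2 = p.1 + e))
      ((C ×ˢ C).filter (fun p => p.2 = p.1 + e')) := by
  rw [Finset.disjoint_left]
  intro p hp hp'
  rw [Finset.mem_filter] at hp hp'
  exact h (add_left_cancel (hp.2 ▸ hp'.2))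

lemma bonds_eq (C : Finset (ℤ × ℤ)) : bonds C = HB C + VB C := by
  have hsplit : (C ×ˢ C).filter (fun p => Adj p.1 p.2)
      = ((C ×ˢ C).filter (fun p => p.2 = p.1 + (1,0)))
        ∪ ((C ×ˢ C).filter (fun p => p.2 = p.1 + (-1,0)))
        ∪ ((C ×ˢ C).filter (fun p => p.2 = p.1 + (0,1)))
        ∪ ((C ×ˢ C).filter (fun p => p.2 = p.1 + (0,-1))) := by
    simp only [← Finset.filter_or]
    apply Finset.filter_congr
    intro p _
    rw [adj_iff]; tauto
  have hcard : ((C ×ˢ C).filter (fun p => Adj p.1 p.2)).card = 2 * (HB C + VB C) := by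
    rw [hsplit]
    rw [Finset.card_union_of_disjoint, Finset.card_union_of_disjoint,
      Finset.card_union_of_disjoint]
    · have h1 := card_dir C (1,0)
      have h2 := card_dir C (-1,0)
      have h3 := card_dir C (0,1)
      have h4 := card_dir C (0,-1)
      have n1 : ((-1 : ℤ), (0:ℤ)) = -(1,0) := by simp [Prod.ext_iff]
      have n2 : ((0 : ℤ), (-1:ℤ)) = -(0,1) := by simp [Prod.ext_iff]
      rw [n1] at h2; rw [n2] at h4
      rw [card_neg] at h2 h4; rw [← n1] at h2; rw [← n2] at h4
      unfold HB VB
      omega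
    · exact disj_dir C (by simp [Prod.ext_iff])
    · exact Finset.disjoint_union_left.2
        ⟨disj_dir C (by simp [Prod.ext_iff]), disj_dir C (by simp [Prod.ext_iff])⟩
    · exact Finset.disjoint_union_left.2
        ⟨Finset.disjoint_union_left.2
          ⟨disj_dir C (by simp [Prod.ext_iff]), disj_dir C (by simp [Prod.ext_iff])⟩,
         disj_dir C (by simp [Prod.ext_iff])⟩
  rw [bonds, hcard]
  omega

set_option maxHeartbeats 1000000 in
lemma HB_le (C : Finset (ℤ × ℤ)) : HB C + (C.image Prod.snd).card ≤ C.card := by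
  classical
  set M := C.filter (fun x => ∀ y ∈ C, y.2 = x.2 → y.1 ≤ x.1) with hM
  have himg : C.image Prod.snd = M.image Prod.snd := by
    apply Finset.Subset.antisymm
    · intro b hb
      rw [Finset.mem_image] at hb
      obtain ⟨x, hx, rfl⟩ := hb
      have hne : ((C.filter (fun y => y.2 = x.2)).image Prod.fst).Nonempty :=
        ⟨x.1, Finset.mem_image.2 ⟨x, Finset.mem_filter.2 ⟨hx, rfl⟩, rfl⟩⟩
      set m := ((C.filter (fun y => y.2 = x.2)).image Prod.fst).max' hne with hm
      have hmem : (m, x.2) ∈ C := by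
        have := ((C.filter (fun y => y.2 = x.2)).image Prod.fst).max'_mem hne
        rw [Finset.mem_image] at this
        obtain ⟨y, hy, hy1⟩ := this
        rw [Finset.mem_filter] at hy
        have : y = (m, x.2) := Prod.ext hy1 hy.2
        exact this ▸ hy.1
      refine Finset.mem_image.2 ⟨(m, x.2), Finset.mem_filter.2 ⟨hmem, ?_⟩, rfl⟩
      intro y hy hy2
      exact Finset.le_max' _ _ (Finset.mem_image.2 ⟨y, Finset.mem_filter.2 ⟨hy, hy2⟩, rfl⟩)
    · exact Finset.image_subset_image (Finset.filter_subset _ _)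
  have h1 : (C.image Prod.snd).card ≤ M.card := himg ▸ Finset.card_image_le
  have hdisj : Disjoint (C.filter (fun x => x + (1,0) ∈ C)) M := by
    rw [Finset.disjoint_left]
    intro x hx hxM
    rw [Finset.mem_filter] at hx hxM
    have := hxM.2 (x + (1,0)) hx.2 (by simp)
    simp at this
  have h2 : (C.filter (fun x => x + (1,0) ∈ C)) ∪ M ⊆ C :=
    Finset.union_subset (Finset.filter_subset _ _) (Finset.filter_subset _ _)
  have h3 := Finset.card_le_card h2
  rw [Finset.card_union_of_disjoint hdisj] at h3
  unfold HB
  omega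

set_option maxHeartbeats 1000000 in
lemma VB_le (C : Finset (ℤ × ℤ)) : VB C + (C.image Prod.fst).card ≤ C.card := by
  classical
  set M := C.filter (fun x => ∀ y ∈ C, y.1 = x.1 → y.2 ≤ x.2) with hM
  have himg : C.image Prod.fst = M.image Prod.fst := by
    apply Finset.Subset.antisymm
    · intro b hb
      rw [Finset.mem_image] at hb
      obtain ⟨x, hx, rfl⟩ := hb
      have hne : ((C.filter (fun y => y.1 = x.1)).image Prod.snd).Nonempty :=
        ⟨x.2, Finset.mem_image.2 ⟨x, Finset.mem_filter.2 ⟨hx, rfl⟩, rfl⟩⟩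
      set m := ((C.filter (fun y => y.1 = x.1)).image Prod.snd).max' hne with hm
      have hmem : (x.1, m) ∈ C := by
        have := ((C.filter (fun y => y.1 = x.1)).image Prod.snd).max'_mem hne
        rw [Finset.mem_image] at this
        obtain ⟨y, hy, hy1⟩ := this
        rw [Finset.mem_filter] at hy
        have : y = (x.1, m) := Prod.ext hy.2 hy1
        exact this ▸ hy.1
      refine Finset.mem_image.2 ⟨(x.1, m), Finset.mem_filter.2 ⟨hmem, ?_⟩, rfl⟩
      intro y hy hy2
      exact Finset.le_max' _ _ (Finset.mem_image.2 ⟨y, Finset.mem_filter.2 ⟨hy, hy2⟩, rfl⟩)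
    · exact Finset.image_subset_image (Finset.filter_subset _ _)
  have h1 : (C.image Prod.fst).card ≤ M.card := himg ▸ Finset.card_image_le
  have hdisj : Disjoint (C.filter (fun x => x + (0,1) ∈ C)) M := by
    rw [Finset.disjoint_left]
    intro x hx hxM
    rw [Finset.mem_filter] at hx hxM
    have := hxM.2 (x + (0,1)) hx.2 (by simp)
    simp at this
  have h2 : (C.filter (fun x => x + (0,1) ∈ C)) ∪ M ⊆ C :=
    Finset.union_subset (Finset.filter_subset _ _) (Finset.filter_subset _ _)
  have h3 := Finset.card_le_card h2
  rw [Finset.card_union_of_disjoint hdisj] at h3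
  unfold VB
  omega

lemma card_le_mul (C : Finset (ℤ × ℤ)) :
    C.card ≤ (C.image Prod.fst).card * (C.image Prod.snd).card := by
  rw [← Finset.card_product]
  apply Finset.card_le_card
  intro x hx
  exact Finset.mem_product.2 ⟨Finset.mem_image_of_mem _ hx, Finset.mem_image_of_mem _ hx⟩

/-- Among subsets of `ℤ²` with exactly `ℓ²` elements the maximal number of
bonds is `2ℓ² - 2ℓ`, attained by the `ℓ × ℓ` square. -/
theorem stmt_14 (ℓ : ℕ) (hℓ : 1 ≤ ℓ) :
    (∀ C : Finset (ℤ × ℤ), C.card = ℓ ^ 2 → bonds C ≤ 2 * ℓ ^ 2 - 2 * ℓ) ∧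
    (Finset.Ico (0 : ℤ) (ℓ : ℤ) ×ˢ Finset.Ico (0 : ℤ) (ℓ : ℤ)).card = ℓ ^ 2 ∧
    bonds (Finset.Ico (0 : ℤ) (ℓ : ℤ) ×ˢ Finset.Ico (0 : ℤ) (ℓ : ℤ))
      = 2 * ℓ ^ 2 - 2 * ℓ := by
  obtain ⟨k, rfl⟩ : ∃ k, ℓ = k + 1 := ⟨ℓ - 1, by omega⟩
  set ℓ := k + 1 with hℓdef
  have hsq : ℓ * ℓ = ℓ ^ 2 := (sq ℓ).symm
  refine ⟨?_, ?_, ?_⟩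
  · intro C hC
    have h1 := HB_le C
    have h2 := VB_le C
    have h3 := card_le_mul C
    set r := (C.image Prod.snd).card
    set c := (C.image Prod.fst).card
    have hrc : 2 * ℓ ≤ c + r := by
      by_contra h
      push_neg at h
      have key : 4 * (c * r) ≤ (c + r) ^ 2 := by nlinarith [two_mul_le_add_sq c r]
      have : 4 * (ℓ ^ 2) ≤ (c + r) ^ 2 := le_trans (by omega) key
      nlinarith
    rw [bonds_eq, hC] at *
    obtain ⟨N, hN⟩ : ∃ N, ℓ ^ 2 = N := ⟨_, rfl⟩
    rw [hN] at h1 h2 h3 ⊢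
    omega
  · rw [Finset.card_product, Int.card_Ico]
    simp [hsq]
  · rw [bonds_eq]
    have hHB : (Finset.Ico (0:ℤ) (ℓ:ℤ) ×ˢ Finset.Ico (0:ℤ) (ℓ:ℤ)).filter
        (fun x => x + (1,0) ∈ Finset.Ico (0:ℤ) (ℓ:ℤ) ×ˢ Finset.Ico (0:ℤ) (ℓ:ℤ))
        = Finset.Ico (0:ℤ) ((ℓ:ℤ) - 1) ×ˢ Finset.Ico (0:ℤ) (ℓ:ℤ) := by
      ext ⟨a, b⟩
      simp only [Finset.mem_filter, Finset.mem_product, Finset.mem_Ico, Prod.mk_add_mk,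
        Prod.fst, Prod.snd]
      omega
    have hVB : (Finset.Ico (0:ℤ) (ℓ:ℤ) ×ˢ Finset.Ico (0:ℤ) (ℓ:ℤ)).filter
        (fun x => x + (0,1) ∈ Finset.Ico (0:ℤ) (ℓ:ℤ) ×ˢ Finset.Ico (0:ℤ) (ℓ:ℤ))
        = Finset.Ico (0:ℤ) (ℓ:ℤ) ×ˢ Finset.Ico (0:ℤ) ((ℓ:ℤ) - 1) := by
      ext ⟨a, b⟩
      simp only [Finset.mem_filter, Finset.mem_product, Finset.mem_Ico, Prod.mk_add_mk,
        Prod.fst, Prod.snd]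
      omega
    unfold HB VB
    rw [hHB, hVB]
    simp only [Finset.card_product, Int.card_Ico]
    have e1 : ((ℓ:ℤ) - 1 - 0).toNat = k := by omega
    have e2 : ((ℓ:ℤ) - 0).toNat = ℓ := by omega
    rw [e1, e2]
    have hle : 2 * ℓ ≤ 2 * ℓ ^ 2 := by nlinarith
    zify [hle]
    rw [hℓdef]; push_cast; ring
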